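/- Let M be the adjacency matrix of an almost semisimple directed graph Γ of growth λ > 1, and let v be a vertex of large growth. Then there exists c > 0 such that for all n ≥ 0, the number of directed paths of length n starting at v satisfies c⁻¹·λⁿ ≤ #{paths of length n from v} ≤ c·λⁿ. -/

import Mathlib

open Filter

/-- The number of directed paths of length `n` starting at vertex `v`, for the graph
with adjacency matrix `M` (with multiplicities): `(Mⁿ 𝟙)_v`. -/
def pathCount {V : Type*} [Fintype V] [DecidableEq V] (M : Matrix V V ℕ) (v : V) (n : ℕ) : ℕ :=
  (M ^ n).mulVec (fun _ => 1) v

/-- A finite directed graph with adjacency matrix `M` is almost semisimple of growth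
`lam > 1` with initial vertex `v0` if every vertex is reachable from `v0`, the largest
modulus of the (complex) eigenvalues of `M` is `lam`, and every eigenvalue of modulus
`lam` has equal geometric and algebraic multiplicity (no nontrivial Jordan blocks:
`ker (M − μ)² = ker (M − μ)`). -/
structure AlmostSemisimple {V : Type*} [Fintype V] [DecidableEq V]
    (M : Matrix V V ℕ) (v0 : V) (lam : ℝ) : Prop where
  growth_gt_one : 1 < lam
  accessible : ∀ v : V, ∃ n : ℕ, (M ^ n) v0 v ≠ 0
  eigen_le : ∀ μ : ℂ, (Matrix.charpoly (M.map (Nat.cast : ℕ → ℂ))).IsRoot μ →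
    ‖μ‖ ≤ lam
  eigen_top : ∃ μ : ℂ, (Matrix.charpoly (M.map (Nat.cast : ℕ → ℂ))).IsRoot μ ∧
    ‖μ‖ = lam
  semisimple_top : ∀ μ : ℂ, ‖μ‖ = lam →
    ∀ x : V → ℂ,
      (M.map (Nat.cast : ℕ → ℂ) - μ • 1).mulVec
          ((M.map (Nat.cast : ℕ → ℂ) - μ • 1).mulVec x) = 0 →
      (M.map (Nat.cast : ℕ → ℂ) - μ • 1).mulVec x = 0

/-- `ρ1 v` is the Cesàro limit `ρ(𝟙)_v = lim_N (1/N) Σ_{n<N} (Mⁿ𝟙)_v / lamⁿ`. -/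
def IsRho1 {V : Type*} [Fintype V] [DecidableEq V] (M : Matrix V V ℕ) (lam : ℝ) (ρ1 : V → ℝ) : Prop :=
  ∀ v : V, Tendsto
    (fun N : ℕ => (N : ℝ)⁻¹ * ∑ n ∈ Finset.range N, (pathCount M v n : ℝ) / lam ^ n)
    atTop (nhds (ρ1 v))

section Aux

set_option linter.unusedSectionVars false

variable {V : Type*} [Fintype V] [DecidableEq V]


lemma charpoly_isRoot_of_eigen (A : Matrix V V ℂ) (μ : ℂ) (x : V → ℂ) (hx : x ≠ 0)
    (h : A.mulVec x = μ • x) : A.charpoly.IsRoot μ := by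
  have hdet : ((μ • 1 - A) : Matrix V V ℂ).det = 0 := by
    rw [← Matrix.exists_mulVec_eq_zero_iff]
    exact ⟨x, hx, by rw [Matrix.sub_mulVec, Matrix.smul_mulVec, Matrix.one_mulVec, h,
      sub_self]⟩
  have hmap : (Matrix.charmatrix A).map (Polynomial.eval μ) = μ • 1 - A := by
    ext i j
    by_cases hij : i = j
    · subst hij
      simp [Matrix.charmatrix_apply_eq]
    · simp [Matrix.charmatrix_apply_ne _ _ _ hij, Matrix.one_apply_ne hij]
  have hchar : A.charpoly.eval μ = ((Matrix.charmatrix A).map (Polynomial.eval μ)).det := by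
    rw [Matrix.charpoly]
    exact (RingHom.map_det (Polynomial.evalRingHom μ) _)
  rw [Polynomial.IsRoot, hchar, hmap, hdet]

lemma mulVecLin_pow' (A : Matrix V V ℂ) (n : ℕ) :
    ((A.mulVecLin : Module.End ℂ (V → ℂ)) ^ n) = (A ^ n).mulVecLin := by
  induction n with
  | zero => simp [Matrix.mulVecLin_one]; rfl
  | succ n ih => rw [pow_succ, pow_succ, ih, Matrix.mulVecLin_mul]; rfl

lemma pow_mulVecLin (A : Matrix V V ℂ) (n : ℕ) (y : V → ℂ) :
    ((A.mulVecLin : Module.End ℂ (V → ℂ)) ^ n) y = (A ^ n).mulVec y := by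
  rw [mulVecLin_pow']
  rfl

lemma ker_stab (g : Module.End ℂ (V → ℂ)) (hg : ∀ z, g (g z) = 0 → g z = 0) :
    ∀ (k : ℕ) (x : V → ℂ), (g ^ (k + 1)) x = 0 → g x = 0 := by
  intro k
  induction k with
  | zero => intro x hx; simpa using hx
  | succ k ih =>
      intro x hx
      have h2 : (g ^ (k + 1)) (g x) = 0 := by
        rw [← Module.End.mul_apply, ← pow_succ]
        exact hx
      exact hg x (ih (g x) h2)

lemma exists_eigvec (g : Module.End ℂ (V → ℂ)) :
    ∀ (k : ℕ) (x : V → ℂ), x ≠ 0 → (g ^ k) x = 0 → ∃ y, y ≠ 0 ∧ g y = 0 := by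
  intro k
  induction k with
  | zero => intro x hx h; exact absurd (by simpa using h) hx
  | succ k ih =>
      intro x hx h
      by_cases hgx : g x = 0
      · exact ⟨x, hx, hgx⟩
      · refine ih (g x) hgx ?_
        rw [← Module.End.mul_apply, ← pow_succ]
        exact h

set_option maxHeartbeats 1000000 in
lemma growth_upper (M : Matrix V V ℕ) (v0 : V) (lam : ℝ)
    (hAS : AlmostSemisimple M v0 lam) :
    ∃ C : ℝ, 0 ≤ C ∧ ∀ (n : ℕ) (w : V), (pathCount M w n : ℝ) ≤ C * lam ^ n := by
  have hlam1 : (1:ℝ) < lam := hAS.growth_gt_one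
  have hlam0 : (0:ℝ) < lam := lt_trans one_pos hlam1
  set A : Matrix V V ℂ := M.map (Nat.cast : ℕ → ℂ) with hA
  set f : Module.End ℂ (V → ℂ) := A.mulVecLin with hf
  let S : Submodule ℂ (V → ℂ) :=
  { carrier := {x | ∃ C : ℝ, ∀ n : ℕ, ‖(f ^ n) x‖ ≤ C * lam ^ n}
    add_mem' := by
      rintro x y ⟨Cx, hx⟩ ⟨Cy, hy⟩
      refine ⟨Cx + Cy, fun n => ?_⟩
      calc ‖(f ^ n) (x + y)‖ ≤ ‖(f ^ n) x‖ + ‖(f ^ n) y‖ := by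
            rw [map_add]; exact norm_add_le _ _
      _ ≤ Cx * lam ^ n + Cy * lam ^ n := add_le_add (hx n) (hy n)
      _ = (Cx + Cy) * lam ^ n := by ring
    zero_mem' := ⟨0, fun n => by simp⟩
    smul_mem' := by
      rintro c x ⟨Cx, hx⟩
      refine ⟨‖c‖ * Cx, fun n => ?_⟩
      rw [map_smul, norm_smul, mul_assoc]
      exact mul_le_mul_of_nonneg_left (hx n) (norm_nonneg c) }
  have hmono : ∀ μ : ℂ, f.maxGenEigenspace μ ≤ S := by
    intro μ x hx
    obtain ⟨k, hk⟩ := (f.mem_maxGenEigenspace μ x).mp hx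
    by_cases hx0 : x = 0
    · exact hx0 ▸ S.zero_mem
    set g : Module.End ℂ (V → ℂ) := f - μ • 1 with hg
    have hgmat : ∀ y, g y = (A - μ • 1).mulVec y := by
      intro y
      simp only [hg, LinearMap.sub_apply, LinearMap.smul_apply, Module.End.one_apply,
        Matrix.sub_mulVec, Matrix.smul_mulVec, Matrix.one_mulVec, hf,
        Matrix.mulVecLin_apply]
    -- μ is an eigenvalue, hence a root of the charpoly
    obtain ⟨y, hy0, hgy⟩ := exists_eigvec g k x hx0 hk
    have hAy : A.mulVec y = μ • y := by
      have := hgy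
      rw [hg] at this
      simp only [LinearMap.sub_apply, LinearMap.smul_apply, Module.End.one_apply,
        sub_eq_zero] at this
      simpa [hf, Matrix.mulVecLin_apply] using this
    have hroot : (A.charpoly).IsRoot μ := charpoly_isRoot_of_eigen A μ y hy0 hAy
    have habs : ‖μ‖ ≤ lam := hAS.eigen_le μ hroot
    rcases habs.lt_or_eq with hlt | heq
    · -- |μ| < lam
      by_cases hμ0 : μ = 0
      · -- nilpotent case
        have hfk : (f ^ k) x = 0 := by
          have : g = f := by rw [hg, hμ0]; simp
          rwa [this] at hk
        refine ⟨∑ m ∈ Finset.range k, ‖(f ^ m) x‖, fun n => ?_⟩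
        by_cases hn : n < k
        · have h1 : ‖(f ^ n) x‖ ≤ ∑ m ∈ Finset.range k, ‖(f ^ m) x‖ :=
            Finset.single_le_sum (f := fun m => ‖(f ^ m) x‖)
              (fun m _ => norm_nonneg _) (Finset.mem_range.mpr hn)
          have h2 : (1:ℝ) ≤ lam ^ n := one_le_pow₀ hlam1.le
          calc ‖(f ^ n) x‖ ≤ ∑ m ∈ Finset.range k, ‖(f ^ m) x‖ := h1
          _ ≤ (∑ m ∈ Finset.range k, ‖(f ^ m) x‖) * lam ^ n :=
              le_mul_of_one_le_right (Finset.sum_nonneg fun m _ => norm_nonneg _) h2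
        · have hzero : (f ^ n) x = 0 := by
            rw [← Nat.sub_add_cancel (le_of_not_gt hn), pow_add, Module.End.mul_apply, hfk,
              map_zero]
          rw [hzero, norm_zero]
          positivity
      · -- 0 < |μ| < lam
        have hμa : 0 < ‖μ‖ := norm_pos_iff.mpr hμ0
        set r : ℝ := ‖μ‖ / lam with hr
        have hr0 : 0 ≤ r := by positivity
        have hr1 : r < 1 := (div_lt_one hlam0).mpr hlt
        have hDs : ∀ m : ℕ, ∃ D : ℝ, ∀ n : ℕ, (n:ℝ) ^ m * r ^ n ≤ D := by
          intro m
          obtain ⟨D, hD⟩ := (tendsto_pow_const_mul_const_pow_of_lt_one m hr0 hr1).bddAbove_range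
          exact ⟨D, fun n => hD (Set.mem_range_self n)⟩
        choose D hD using hDs
        have hD0 : ∀ m, 0 ≤ D m := by
          intro m
          refine le_trans ?_ (hD m 1)
          positivity
        have hcomm : Commute g (μ • (1 : Module.End ℂ (V → ℂ))) := by
          unfold Commute SemiconjBy
          ext z
          simp [Module.End.mul_apply, map_smul]
        have hfg : f = g + μ • 1 := by rw [hg]; abel
        refine ⟨∑ m ∈ Finset.range k, D m * ((‖μ‖)⁻¹) ^ m * ‖(g ^ m) x‖,
          fun n => ?_⟩
        have hexp : (f ^ n) x
            = ∑ m ∈ Finset.range (n + 1), (n.choose m : ℂ) • (μ ^ (n - m) • ((g ^ m) x)) := by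
          rw [hfg, hcomm.add_pow]
          rw [LinearMap.coe_sum, Finset.sum_apply]
          refine Finset.sum_congr rfl fun m hm => ?_
          simp only [Module.End.mul_apply, Module.End.natCast_apply, smul_pow, one_pow,
            LinearMap.smul_apply, Module.End.one_apply, map_smul, map_nsmul,
            Nat.cast_smul_eq_nsmul ℂ]
        calc ‖(f ^ n) x‖
            ≤ ∑ m ∈ Finset.range (n + 1),
                (n.choose m : ℝ) * (‖μ‖) ^ (n - m) * ‖(g ^ m) x‖ := by
              rw [hexp]
              refine le_trans (norm_sum_le _ _) (le_of_eq (Finset.sum_congr rfl fun m _ => ?_))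
              rw [norm_smul, norm_smul, norm_pow]
              simp [Complex.norm_natCast, mul_assoc]
        _ ≤ ∑ m ∈ Finset.range (n + 1),
              (if m < k then (n.choose m : ℝ) * (‖μ‖) ^ (n - m) * ‖(g ^ m) x‖ else 0) := by
              refine Finset.sum_le_sum fun m _ => ?_
              split
              · exact le_rfl
              · rename_i hmk
                have hgm : (g ^ m) x = 0 := by
                  rw [← Nat.sub_add_cancel (le_of_not_gt hmk), pow_add, Module.End.mul_apply, hk,
                    map_zero]
                rw [hgm, norm_zero, mul_zero]
        _ = ∑ m ∈ (Finset.range (n + 1)).filter (· < k),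
              (n.choose m : ℝ) * (‖μ‖) ^ (n - m) * ‖(g ^ m) x‖ :=
              (Finset.sum_filter _ _).symm
        _ ≤ ∑ m ∈ Finset.range k,
              (n.choose m : ℝ) * (‖μ‖) ^ (n - m) * ‖(g ^ m) x‖ := by
              refine Finset.sum_le_sum_of_subset_of_nonneg ?_ ?_
              · intro m hm
                simp only [Finset.mem_filter, Finset.mem_range] at hm ⊢
                exact hm.2
              · intro m _ _
                positivity
        _ ≤ ∑ m ∈ Finset.range k,
              (D m * ((‖μ‖)⁻¹) ^ m * ‖(g ^ m) x‖) * lam ^ n := by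
              refine Finset.sum_le_sum fun m hm => ?_
              rcases le_or_gt m n with hmn | hnm
              · have hch : (n.choose m : ℝ) ≤ (n : ℝ) ^ m := by
                  exact_mod_cast Nat.choose_le_pow n m
                have hpow : (‖μ‖) ^ (n - m)
                    = (‖μ‖) ^ n * ((‖μ‖)⁻¹) ^ m := by
                  rw [pow_sub₀ _ (ne_of_gt hμa) hmn, inv_pow]
                have habsn : (‖μ‖) ^ n = r ^ n * lam ^ n := by
                  rw [hr, div_pow, div_mul_cancel₀]
                  positivity
                rw [hpow, habsn]
                have key : (n.choose m : ℝ) * (r ^ n * lam ^ n * ((‖μ‖)⁻¹) ^ m)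
                    ≤ D m * ((‖μ‖)⁻¹) ^ m * lam ^ n := by
                  have h1 : (n.choose m : ℝ) * r ^ n ≤ (n:ℝ) ^ m * r ^ n :=
                    mul_le_mul_of_nonneg_right hch (by positivity)
                  have h2 : (n:ℝ) ^ m * r ^ n ≤ D m := hD m n
                  nlinarith [pow_nonneg (inv_nonneg.mpr (norm_nonneg μ)) m,
                    pow_pos hlam0 n, mul_le_mul_of_nonneg_right (h1.trans h2)
                      (mul_nonneg (pow_nonneg (inv_nonneg.mpr (norm_nonneg μ)) m)
                        (pow_nonneg hlam0.le n))]
                calc (n.choose m : ℝ) * (r ^ n * lam ^ n * ((‖μ‖)⁻¹) ^ m) * ‖(g ^ m) x‖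
                    ≤ D m * ((‖μ‖)⁻¹) ^ m * lam ^ n * ‖(g ^ m) x‖ :=
                      mul_le_mul_of_nonneg_right key (norm_nonneg _)
                _ = (D m * ((‖μ‖)⁻¹) ^ m * ‖(g ^ m) x‖) * lam ^ n := by ring
              · rw [Nat.choose_eq_zero_of_lt hnm]
                simp only [Nat.cast_zero, zero_mul]
                have := hD0 m
                positivity
        _ = (∑ m ∈ Finset.range k, D m * ((‖μ‖)⁻¹) ^ m * ‖(g ^ m) x‖) * lam ^ n :=
              (Finset.sum_mul _ _ _).symm
    · -- |μ| = lam : semisimple case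
      have hsg : ∀ z, g (g z) = 0 → g z = 0 := by
        intro z hz
        have h2 : (A - μ • 1).mulVec ((A - μ • 1).mulVec z) = 0 := by
          rw [← hgmat, ← hgmat]
          exact hz
        have := hAS.semisimple_top μ heq z h2
        rw [hgmat]
        exact this
      cases k with
      | zero =>
          exact absurd (by simpa using hk) hx0
      | succ k =>
          have hgx : g x = 0 := ker_stab g hsg k x hk
          have hfx : f x = μ • x := by
            have := hgx
            rw [hg] at this
            simpa [LinearMap.sub_apply, sub_eq_zero] using this
          have hfn : ∀ n : ℕ, (f ^ n) x = μ ^ n • x := by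
            intro n
            induction n with
            | zero => simp
            | succ n ih =>
                rw [pow_succ, Module.End.mul_apply, hfx, map_smul, ih, smul_smul, pow_succ,
                  mul_comm]
          refine ⟨‖x‖, fun n => ?_⟩
          rw [hfn, norm_smul, norm_pow]
          simp only [heq]
          ring_nf
          exact le_rfl
  have h1mem : (fun _ => (1:ℂ)) ∈ S := by
    have htop := Module.End.iSup_maxGenEigenspace_eq_top f
    have hle : (⨆ μ : ℂ, f.maxGenEigenspace μ) ≤ S := iSup_le hmono
    exact hle (htop ▸ Submodule.mem_top)
  obtain ⟨C, hC⟩ := h1mem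
  refine ⟨max C 0, le_max_right _ _, fun n w => ?_⟩
  have hval : (f ^ n) (fun _ => (1:ℂ)) w = ((pathCount M w n : ℕ) : ℂ) := by
    rw [pow_mulVecLin]
    have hpow : (A ^ n) = (M ^ n).map (Nat.cast : ℕ → ℂ) := by
      have h := map_pow ((Nat.castRingHom ℂ).mapMatrix) M n
      simp only [RingHom.mapMatrix_apply, Nat.coe_castRingHom] at h
      exact h.symm
    rw [hpow]
    simp only [pathCount, Matrix.mulVec, dotProduct, Matrix.map_apply, mul_one]
    push_cast
    rfl
  have hpc : ((pathCount M w n : ℝ)) ≤ ‖(f ^ n) (fun _ => (1:ℂ))‖ := by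
    have : ‖(f ^ n) (fun _ => (1:ℂ)) w‖ = (pathCount M w n : ℝ) := by
      rw [hval]
      simp
    rw [← this]
    exact norm_le_pi_norm _ w
  calc ((pathCount M w n : ℝ)) ≤ C * lam ^ n := le_trans hpc (hC n)
  _ ≤ max C 0 * lam ^ n := mul_le_mul_of_nonneg_right (le_max_left _ _) (by positivity)

set_option maxHeartbeats 1000000 in
lemma cesaro_eig (M : Matrix V V ℕ) (lam : ℝ) (hlam0 : 0 < lam)
    (ρ1 : V → ℝ) (hρ : IsRho1 M lam ρ1) (w : V) :
    ∑ u, (M w u : ℝ) * ρ1 u = lam * ρ1 w := by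
  have hrec : ∀ (w : V) (n : ℕ),
      (pathCount M w (n + 1) : ℝ) = ∑ u, (M w u : ℝ) * (pathCount M u n : ℝ) := by
    intro w n
    have h : pathCount M w (n + 1) = ∑ u, M w u * pathCount M u n := by
      simp only [pathCount, pow_succ', ← Matrix.mulVec_mulVec]
      rfl
    rw [h]
    push_cast
    rfl
  -- the shifted Cesàro averages converge to the same limit
  have h1 : Tendsto (fun N : ℕ => (N : ℝ)⁻¹ *
      ∑ n ∈ Finset.range N, (pathCount M w (n + 1) : ℝ) / lam ^ (n + 1))
      atTop (nhds (ρ1 w)) := by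
    set G : ℕ → ℝ := fun N => (N : ℝ)⁻¹ * ∑ n ∈ Finset.range N, (pathCount M w n : ℝ) / lam ^ n
      with hG
    have hident : ∀ N : ℕ, (N : ℝ)⁻¹ *
        ∑ n ∈ Finset.range N, (pathCount M w (n + 1) : ℝ) / lam ^ (n + 1)
        = G (N + 1) * (((N : ℝ) + 1) * (N : ℝ)⁻¹) - (N : ℝ)⁻¹ * (pathCount M w 0 : ℝ) := by
      intro N
      have hs := Finset.sum_range_succ' (fun n => (pathCount M w n : ℝ) / lam ^ n) N
      cases N with
      | zero => simp
      | succ K =>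
          have hKz : ((K : ℝ) + 1) ≠ 0 := by positivity
          have hK2z : ((K : ℝ) + 2) ≠ 0 := by positivity
          rw [hG]
          push_cast
          rw [hs]
          field_simp
          ring
    rw [show (fun N : ℕ => (N : ℝ)⁻¹ *
        ∑ n ∈ Finset.range N, (pathCount M w (n + 1) : ℝ) / lam ^ (n + 1))
        = fun N : ℕ => G (N + 1) * (((N : ℝ) + 1) * (N : ℝ)⁻¹)
            - (N : ℝ)⁻¹ * (pathCount M w 0 : ℝ) from funext hident]
    have hGG : Tendsto (fun N : ℕ => G (N + 1)) atTop (nhds (ρ1 w)) :=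
      (hρ w).comp (tendsto_add_atTop_nat 1)
    have hrat : Tendsto (fun N : ℕ => ((N : ℝ) + 1) * (N : ℝ)⁻¹) atTop (nhds 1) := by
      have h0 : Tendsto (fun N : ℕ => 1 + (N : ℝ)⁻¹) atTop (nhds 1) := by
        simpa using tendsto_const_nhds.add (tendsto_inv_atTop_nhds_zero_nat (𝕜 := ℝ))
      refine h0.congr' ?_
      filter_upwards [eventually_ge_atTop 1] with N hN
      have hNz : (N : ℝ) ≠ 0 := by
        have : (1 : ℝ) ≤ (N : ℝ) := by exact_mod_cast hN
        linarith
      field_simp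
    have hsub : Tendsto (fun N : ℕ => G (N + 1) * (((N : ℝ) + 1) * (N : ℝ)⁻¹)
        - (N : ℝ)⁻¹ * (pathCount M w 0 : ℝ)) atTop (nhds (ρ1 w * 1 - 0 * (pathCount M w 0 : ℝ))) :=
      (hGG.mul hrat).sub (tendsto_inv_atTop_nhds_zero_nat.mul_const _)
    simpa using hsub
  have h2 : Tendsto (fun N : ℕ => ∑ u, (M w u : ℝ) *
      ((N : ℝ)⁻¹ * ∑ n ∈ Finset.range N, (pathCount M u n : ℝ) / lam ^ n))
      atTop (nhds (∑ u, (M w u : ℝ) * ρ1 u)) :=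
    tendsto_finset_sum _ fun u _ => (hρ u).const_mul _
  have h3 : ∀ N : ℕ, ∑ u, (M w u : ℝ) *
      ((N : ℝ)⁻¹ * ∑ n ∈ Finset.range N, (pathCount M u n : ℝ) / lam ^ n)
      = lam * ((N : ℝ)⁻¹ *
          ∑ n ∈ Finset.range N, (pathCount M w (n + 1) : ℝ) / lam ^ (n + 1)) := by
    intro N
    have hterm : ∀ n : ℕ, ∑ u, (M w u : ℝ) * ((pathCount M u n : ℝ) / lam ^ n)
        = lam * ((pathCount M w (n + 1) : ℝ) / lam ^ (n + 1)) := by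
      intro n
      have hpow : lam ^ (n + 1) = lam ^ n * lam := pow_succ lam n
      have hlamn : lam ^ n ≠ 0 := by positivity
      have hlamz : lam ≠ 0 := ne_of_gt hlam0
      rw [hpow, hrec w n]
      simp_rw [← mul_div_assoc]
      rw [← Finset.sum_div]
      field_simp
    calc ∑ u, (M w u : ℝ) *
          ((N : ℝ)⁻¹ * ∑ n ∈ Finset.range N, (pathCount M u n : ℝ) / lam ^ n)
        = (N : ℝ)⁻¹ * ∑ n ∈ Finset.range N,
            ∑ u, (M w u : ℝ) * ((pathCount M u n : ℝ) / lam ^ n) := by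
          simp_rw [Finset.mul_sum]
          rw [Finset.sum_comm]
          exact Finset.sum_congr rfl fun n _ => Finset.sum_congr rfl fun u _ => by ring
    _ = (N : ℝ)⁻¹ * ∑ n ∈ Finset.range N,
            lam * ((pathCount M w (n + 1) : ℝ) / lam ^ (n + 1)) := by
          rw [Finset.sum_congr rfl fun n _ => hterm n]
    _ = lam * ((N : ℝ)⁻¹ *
            ∑ n ∈ Finset.range N, (pathCount M w (n + 1) : ℝ) / lam ^ (n + 1)) := by
          rw [← Finset.mul_sum]
          ring
  have h4 : Tendsto (fun N : ℕ => ∑ u, (M w u : ℝ) *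
      ((N : ℝ)⁻¹ * ∑ n ∈ Finset.range N, (pathCount M u n : ℝ) / lam ^ n))
      atTop (nhds (lam * ρ1 w)) := by
    rw [funext h3]
    exact h1.const_mul lam
  exact tendsto_nhds_unique h2 h4

end Aux

/-- in an almost semisimple graph of growth `lam > 1`, for any vertex `v`
of large growth (`ρ(𝟙)_v > 0`) there is `c > 0` with
`c⁻¹·lamⁿ ≤ #{paths of length n from v} ≤ c·lamⁿ` for all `n`. -/
theorem pathCount_large_growth {V : Type*} [Fintype V] [DecidableEq V]
    (M : Matrix V V ℕ) (v0 : V) (lam : ℝ) (hAS : AlmostSemisimple M v0 lam)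
    (ρ1 : V → ℝ) (hρ : IsRho1 M lam ρ1)
    (v : V) (hv : 0 < ρ1 v) :
    ∃ c > (0 : ℝ), ∀ n : ℕ,
      c⁻¹ * lam ^ n ≤ (pathCount M v n : ℝ) ∧
      (pathCount M v n : ℝ) ≤ c * lam ^ n := by
  have hlam1 : (1 : ℝ) < lam := hAS.growth_gt_one
  have hlam0 : (0 : ℝ) < lam := lt_trans one_pos hlam1
  obtain ⟨C, hC0, hCb⟩ := growth_upper M v0 lam hAS
  have hnn : ∀ w, 0 ≤ ρ1 w := by
    intro w
    refine ge_of_tendsto' (hρ w) fun N => ?_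
    exact mul_nonneg (inv_nonneg.mpr (Nat.cast_nonneg N))
      (Finset.sum_nonneg fun n _ => div_nonneg (Nat.cast_nonneg _) (pow_nonneg hlam0.le n))
  have heig := cesaro_eig M lam hlam0 ρ1 hρ
  have hiter : ∀ (n : ℕ), ∀ (w : V), ∑ u, ((M ^ n) w u : ℝ) * ρ1 u = lam ^ n * ρ1 w := by
    intro n
    induction n with
    | zero =>
        intro w
        simp [Matrix.one_apply]
    | succ n ih =>
        intro w
        calc ∑ u, ((M ^ (n + 1)) w u : ℝ) * ρ1 u
            = ∑ u, (∑ t, (M w t : ℝ) * ((M ^ n) t u : ℝ)) * ρ1 u := by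
              refine Finset.sum_congr rfl fun u _ => ?_
              congr 1
              rw [pow_succ', Matrix.mul_apply]
              push_cast
              rfl
        _ = ∑ t, (M w t : ℝ) * ∑ u, ((M ^ n) t u : ℝ) * ρ1 u := by
              simp_rw [Finset.sum_mul, Finset.mul_sum]
              rw [Finset.sum_comm]
              exact Finset.sum_congr rfl fun t _ => Finset.sum_congr rfl fun u _ => by ring
        _ = ∑ t, (M w t : ℝ) * (lam ^ n * ρ1 t) :=
              Finset.sum_congr rfl fun t _ => by rw [ih t]
        _ = lam ^ n * ∑ t, (M w t : ℝ) * ρ1 t := by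
              rw [Finset.mul_sum]
              exact Finset.sum_congr rfl fun t _ => by ring
        _ = lam ^ (n + 1) * ρ1 w := by rw [heig w]; ring
  have hpcsum : ∀ (n : ℕ) (w : V), (pathCount M w n : ℝ) = ∑ u, ((M ^ n) w u : ℝ) := by
    intro n w
    simp only [pathCount, Matrix.mulVec, dotProduct, mul_one]
    push_cast
    rfl
  set R : ℝ := ∑ u, ρ1 u with hR
  have hRpos : 0 < R :=
    lt_of_lt_of_le hv (Finset.single_le_sum (fun u _ => hnn u) (Finset.mem_univ v))
  have hlow : ∀ n : ℕ, (ρ1 v / R) * lam ^ n ≤ (pathCount M v n : ℝ) := by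
    intro n
    have h1 : lam ^ n * ρ1 v ≤ (pathCount M v n : ℝ) * R := by
      rw [← hiter n v, hpcsum n v, Finset.sum_mul]
      refine Finset.sum_le_sum fun u _ => ?_
      exact mul_le_mul_of_nonneg_left
        (Finset.single_le_sum (fun t _ => hnn t) (Finset.mem_univ u)) (Nat.cast_nonneg _)
    rw [div_mul_eq_mul_div, div_le_iff₀ hRpos]
    calc ρ1 v * lam ^ n = lam ^ n * ρ1 v := mul_comm _ _
    _ ≤ _ := h1
  refine ⟨max C (R / ρ1 v), lt_max_of_lt_right (div_pos hRpos hv), fun n => ?_⟩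
  constructor
  · have hcinv : (max C (R / ρ1 v))⁻¹ ≤ ρ1 v / R := by
      have h2 : (max C (R / ρ1 v))⁻¹ ≤ (R / ρ1 v)⁻¹ :=
        inv_anti₀ (div_pos hRpos hv) (le_max_right _ _)
      rwa [inv_div] at h2
    calc (max C (R / ρ1 v))⁻¹ * lam ^ n ≤ (ρ1 v / R) * lam ^ n :=
          mul_le_mul_of_nonneg_right hcinv (by positivity)
    _ ≤ _ := hlow n
  · calc (pathCount M v n : ℝ) ≤ C * lam ^ n := hCb n v
    _ ≤ max C (R / ρ1 v) * lam ^ n :=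
          mul_le_mul_of_nonneg_right (le_max_left _ _) (by positivity)
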